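/- Let (𝒟,K) and (𝒞,J) be small sites and p : 𝒟 ⥤ 𝒞 a comorphism of sites which is moreover continuous, so that the restriction functor ρ_p : Sheaf J ⥤ Sheaf K, F ↦ F ∘ p.op, is defined; let L : Sheaf K ⥤ Sheaf J be a left adjoint of ρ_p. Then a morphism f : d' ⟶ d of 𝒟 is K-locally cartesian if and only if l_K(f) : l_K(d') ⟶ l_K(d) is cartesian for L. -/

import Mathlib

open CategoryTheory Limits

universe u

/-- A morphism `f : d' ⟶ d` is cartesian for a functor `p : 𝒟 ⥤ 𝒞`. -/
def IsCartesianFor {D : Type*} [Category D] {C : Type*} [Category C] (p : D ⥤ C)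
    {d' d : D} (f : d' ⟶ d) : Prop :=
  ∀ {d'' : D} (g : d'' ⟶ d) (h : p.obj d'' ⟶ p.obj d'),
    h ≫ p.map f = p.map g → ∃! h' : d'' ⟶ d', p.map h' = h ∧ h' ≫ f = g

/-- A morphism `f : d' ⟶ d` is `K`-locally cartesian for `p : 𝒟 ⥤ 𝒞`. -/
def LocallyCartesian {D : Type*} [Category D] {C : Type*} [Category C]
    (K : GrothendieckTopology D) (p : D ⥤ C) {d' d : D} (f : d' ⟶ d) : Prop :=
  (∀ (d'' : D) (g : d'' ⟶ d) (h : p.obj d'' ⟶ p.obj d'),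
      h ≫ p.map f = p.map g →
      ∃ S : Sieve d'', S ∈ K d'' ∧
        ∀ {e : D} (v : e ⟶ d''), S.arrows v →
          ∃ hv : e ⟶ d', p.map v ≫ h = p.map hv ∧ hv ≫ f = v ≫ g) ∧
  (∀ (d'' : D) (h h' : d'' ⟶ d'), h ≫ f = h' ≫ f → p.map h = p.map h' →
      ∃ S : Sieve d'', S ∈ K d'' ∧ ∀ {e : D} (v : e ⟶ d''), S.arrows v → v ≫ h = v ≫ h')

/-- A functor `p : (𝒟, K) ⥤ (𝒞, J)` is a comorphism of sites. -/
def IsComorphismOfSites {D : Type*} [Category D] {C : Type*} [Category C] (p : D ⥤ C)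
    (K : GrothendieckTopology D) (J : GrothendieckTopology C) : Prop :=
  ∀ (d : D) (S : Sieve (p.obj d)), S ∈ J (p.obj d) → S.functorPullback p ∈ K d

variable {D C : Type u} [SmallCategory D] [SmallCategory C]

/-- `l_J : 𝒞 ⥤ Sheaf J`, the Yoneda embedding followed by sheafification. -/
noncomputable def lSh (J : GrothendieckTopology C) : C ⥤ Sheaf J (Type u) :=
  yoneda ⋙ presheafToSheaf J (Type u)

/-- The restriction functor `ρ_p : Sheaf J ⥤ Sheaf K`, `F ↦ F ∘ p.op`, defined when `p` is
continuous. -/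
def restrictSheaf (p : D ⥤ C) (K : GrothendieckTopology D) (J : GrothendieckTopology C)
    (hcont : ∀ F : Sheaf J (Type u), Presheaf.IsSheaf K (p.op ⋙ F.val)) :
    Sheaf J (Type u) ⥤ Sheaf K (Type u) where
  obj F := ⟨p.op ⋙ F.val, hcont F⟩
  map φ := ⟨Functor.whiskerLeft p.op φ.hom⟩
  map_id := by intros; apply Sheaf.hom_ext; rfl
  map_comp := by intros; apply Sheaf.hom_ext; rfl

namespace LocCartAux

open Opposite

section Site

variable {E : Type u} [SmallCategory E] (T : GrothendieckTopology E)

/-- The canonical section of the sheafified yoneda presheaf attached to a morphism. -/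
noncomputable def ys (c : E) {e : E} (v : e ⟶ c) : ((lSh T).obj c).val.obj (op e) :=
  (toSheafify T (yoneda.obj c)).app (op e) v

lemma ys_res (c : E) {e e' : E} (w : e' ⟶ e) (v : e ⟶ c) :
    ((lSh T).obj c).val.map w.op (ys T c v) = ys T c (w ≫ v) :=
  (NatTrans.naturality_apply (toSheafify T (yoneda.obj c)) w.op v).symm

lemma ys_map {c c' : E} (m : c ⟶ c') {e : E} (v : e ⟶ c) :
    ((lSh T).map m).hom.app (op e) (ys T c v) = ys T c' (v ≫ m) :=
  (types_congr_hom (NatTrans.congr_app (toSheafify_naturality T (yoneda.map m)) (op e)) v).symm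

lemma sections_ext (F : Sheaf T (Type u)) {e : E} {s t : F.val.obj (op e)}
    {S : Sieve e} (hS : S ∈ T e)
    (h : ∀ ⦃e'⦄ (w : e' ⟶ e), S.arrows w → F.val.map w.op s = F.val.map w.op t) : s = t :=
  (Presieve.IsSheaf.isSeparated ((isSheaf_iff_isSheaf_of_type T F.val).1 F.cond) S hS).ext (fun _ g hg => h g hg)

lemma ys_locally_surjective (c : E) {e : E} (s : ((lSh T).obj c).val.obj (op e)) :
    ∃ S : Sieve e, S ∈ T e ∧ ∀ ⦃e' : E⦄ (v : e' ⟶ e), S.arrows v →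
      ∃ g : e' ⟶ c, ys T c g = ((lSh T).obj c).val.map v.op s := by
  refine ⟨Presheaf.imageSieve (toSheafify T (yoneda.obj c)) s,
    Presheaf.imageSieve_mem T (toSheafify T (yoneda.obj c)) s, ?_⟩
  rintro e' v ⟨g, hg⟩
  exact ⟨g, hg⟩

lemma ys_locally_injective (c : E) {e : E} {g₁ g₂ : e ⟶ c} (h : ys T c g₁ = ys T c g₂) :
    ∃ S : Sieve e, S ∈ T e ∧ ∀ ⦃e' : E⦄ (v : e' ⟶ e), S.arrows v → v ≫ g₁ = v ≫ g₂ := by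
  refine ⟨Presheaf.equalizerSieve (F := yoneda.obj c) g₁ g₂,
    Presheaf.equalizerSieve_mem T (toSheafify T (yoneda.obj c)) g₁ g₂ h, ?_⟩
  intro e' v hv
  exact hv

lemma hom_ext_l {c : E} {F : Sheaf T (Type u)} (m m' : (lSh T).obj c ⟶ F)
    (h : m.hom.app (op c) (ys T c (𝟙 c)) = m'.hom.app (op c) (ys T c (𝟙 c))) : m = m' := by
  apply Sheaf.hom_ext
  apply sheafify_hom_ext T _ _ F.cond
  apply yonedaEquiv.injective
  exact (yonedaEquiv_comp _ _).trans (h.trans (yonedaEquiv_comp _ _).symm)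

lemma local_choice {e : E} {S : Sieve e} (hS : S ∈ T e)
    (P : ∀ ⦃e' : E⦄, (e' ⟶ e) → Prop)
    (h : ∀ ⦃e' : E⦄ (v : e' ⟶ e), S.arrows v → ∃ R : Sieve e', R ∈ T e' ∧
      ∀ ⦃e₀ : E⦄ (z : e₀ ⟶ e'), R.arrows z → P (z ≫ v)) :
    ∃ W : Sieve e, W ∈ T e ∧ ∀ ⦃e' : E⦄ (w : e' ⟶ e), W.arrows w → P w := by
  choose R hR hRP using h
  refine ⟨Sieve.bind S.arrows (fun _ _ hv => R _ hv), T.bind_covering hS hR, ?_⟩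
  rintro e' w ⟨Y, z, v, hv, hz, rfl⟩
  exact hRP _ hv _ hz

end Site


section Comparison

variable (p : D ⥤ C) (K : GrothendieckTopology D) (J : GrothendieckTopology C)
variable (hcont : ∀ F : Sheaf J (Type u), Presheaf.IsSheaf K (p.op ⋙ F.val))

/-- The presheaf morphism sending `v : e ⟶ c` to the canonical section attached to `p.map v`. -/
noncomputable def tau (c : D) : yoneda.obj c ⟶ p.op ⋙ ((lSh J).obj (p.obj c)).val where
  app e := TypeCat.ofHom fun v => ys J (p.obj c) (p.map v)
  naturality e e' w := by
    ext v
    exact ((ys_res J (p.obj c) (p.map w.unop) (p.map v)).trans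
      (congrArg (ys J (p.obj c)) (p.map_comp w.unop v).symm)).symm

/-- The canonical comparison `l_K c ⟶ ρ_p (l_J (p c))`. -/
noncomputable def theta (c : D) :
    (lSh K).obj c ⟶ (restrictSheaf p K J hcont).obj ((lSh J).obj (p.obj c)) :=
  ⟨sheafifyLift K (tau p J c) (hcont ((lSh J).obj (p.obj c)))⟩

lemma theta_app (c : D) {e : D} (v : e ⟶ c) :
    (theta p K J hcont c).hom.app (op e) (ys K c v) = ys J (p.obj c) (p.map v) :=
  types_congr_hom (NatTrans.congr_app
    (toSheafify_sheafifyLift K (tau p J c) (hcont ((lSh J).obj (p.obj c)))) (op e)) v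

variable (L : Sheaf K (Type u) ⥤ Sheaf J (Type u)) (adj : L ⊣ restrictSheaf p K J hcont)

/-- The comparison `L (l_K c) ⟶ l_J (p c)`. -/
noncomputable def eps (c : D) : L.obj ((lSh K).obj c) ⟶ (lSh J).obj (p.obj c) :=
  (adj.homEquiv _ _).symm (theta p K J hcont c)

lemma homEquiv_eps (c : D) :
    adj.homEquiv _ _ (eps p K J hcont L adj c) = theta p K J hcont c :=
  (adj.homEquiv _ _).apply_symm_apply _

lemma homEquiv_Lmap_comp_eps {c : D} {X : Sheaf K (Type u)} (h' : X ⟶ (lSh K).obj c) :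
    adj.homEquiv _ _ (L.map h' ≫ eps p K J hcont L adj c) = h' ≫ theta p K J hcont c := by
  rw [Adjunction.homEquiv_naturality_left, homEquiv_eps]

/-- Evaluation of a morphism `L (l_K c) ⟶ F` at the canonical generating section. -/
noncomputable def phi {c : D} {F : Sheaf J (Type u)} (u : L.obj ((lSh K).obj c) ⟶ F) :
    F.val.obj (op (p.obj c)) :=
  ((adj.homEquiv _ F) u).hom.app (op c) (ys K c (𝟙 c))

lemma hom_ext_L {c : D} {F : Sheaf J (Type u)} {u u' : L.obj ((lSh K).obj c) ⟶ F}
    (h : phi p K J hcont L adj u = phi p K J hcont L adj u') : u = u' :=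
  (adj.homEquiv _ _).injective (hom_ext_l K _ _ h)

lemma phi_comp {c : D} {F F' : Sheaf J (Type u)} (u : L.obj ((lSh K).obj c) ⟶ F) (w : F ⟶ F') :
    phi p K J hcont L adj (u ≫ w) = w.hom.app (op (p.obj c)) (phi p K J hcont L adj u) := by
  unfold phi
  rw [Adjunction.homEquiv_naturality_right]
  rfl

lemma phi_pre {c c' : D} (m : c ⟶ c') {F : Sheaf J (Type u)} (u : L.obj ((lSh K).obj c') ⟶ F) :
    phi p K J hcont L adj (L.map ((lSh K).map m) ≫ u)
      = F.val.map (p.map m).op (phi p K J hcont L adj u) := by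
  unfold phi
  rw [Adjunction.homEquiv_naturality_left]
  have h1 : ((lSh K).map m).hom.app (op c) (ys K c (𝟙 c)) = ys K c' m := by
    rw [ys_map, Category.id_comp]
  have h2 : ((lSh K).obj c').val.map m.op (ys K c' (𝟙 c')) = ys K c' m := by
    rw [ys_res, Category.comp_id]
  calc (((lSh K).map m ≫ (adj.homEquiv _ F) u).hom).app (op c) (ys K c (𝟙 c))
      = ((adj.homEquiv _ F) u).hom.app (op c) (((lSh K).map m).hom.app (op c) (ys K c (𝟙 c))) := rfl
    _ = ((adj.homEquiv _ F) u).hom.app (op c) (((lSh K).obj c').val.map m.op (ys K c' (𝟙 c'))) := by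
        rw [h1, h2]
    _ = (show ((restrictSheaf p K J hcont).obj F).val.obj (op c) from F.val.map (p.map m).op (((adj.homEquiv _ F) u).hom.app (op c') (ys K c' (𝟙 c')))) :=
        NatTrans.naturality_apply ((adj.homEquiv _ F) u).hom m.op _

lemma phi_eps (c : D) :
    phi p K J hcont L adj (eps p K J hcont L adj c) = ys J (p.obj c) (𝟙 (p.obj c)) := by
  unfold phi
  rw [homEquiv_eps, theta_app]
  rw [p.map_id]

lemma phi_id (c : D) :
    phi p K J hcont L adj (𝟙 (L.obj ((lSh K).obj c)))
      = (adj.unit.app ((lSh K).obj c)).hom.app (op c) (ys K c (𝟙 c)) := by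
  unfold phi
  rw [Adjunction.homEquiv_unit, CategoryTheory.Functor.map_id]
  exact types_congr_hom (NatTrans.congr_app (congrArg InducedCategory.Hom.hom
    (Category.comp_id (adj.unit.app ((lSh K).obj c)))) (op c)) (ys K c (𝟙 c))

lemma eps_isIso (c : D) : IsIso (eps p K J hcont L adj c) := by
  set t := phi p K J hcont L adj (𝟙 (L.obj ((lSh K).obj c))) with ht
  set δ : (lSh J).obj (p.obj c) ⟶ L.obj ((lSh K).obj c) :=
    ⟨sheafifyLift J (yonedaEquiv.symm t) (L.obj ((lSh K).obj c)).cond⟩ with hδ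
  have hδapp : δ.hom.app (op (p.obj c)) (ys J (p.obj c) (𝟙 (p.obj c))) = t := by
    have h := types_congr_hom (NatTrans.congr_app
      (toSheafify_sheafifyLift J (yonedaEquiv.symm t) (L.obj ((lSh K).obj c)).cond)
      (op (p.obj c))) (𝟙 (p.obj c))
    exact h.trans ((yonedaEquiv_symm_app_apply t _ _).trans
      (by rw [op_id, CategoryTheory.Functor.map_id]; rfl))
  refine ⟨⟨δ, ?_, ?_⟩⟩
  · apply hom_ext_L p K J hcont L adj
    rw [phi_comp, phi_eps, hδapp, ht]
  · apply hom_ext_l J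
    have h0 : adj.unit.app ((lSh K).obj c) ≫
        (restrictSheaf p K J hcont).map (eps p K J hcont L adj c) = theta p K J hcont c :=
      (adj.homEquiv_unit _ _ (eps p K J hcont L adj c)).symm.trans
        (homEquiv_eps p K J hcont L adj c)
    have h1 : (eps p K J hcont L adj c).hom.app (op (p.obj c)) t
        = ys J (p.obj c) (𝟙 (p.obj c)) := by
      rw [ht, phi_id]
      have h2 := types_congr_hom (NatTrans.congr_app (congrArg InducedCategory.Hom.hom h0) (op c))
        (ys K c (𝟙 c))
      calc (eps p K J hcont L adj c).hom.app (op (p.obj c))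
            ((adj.unit.app ((lSh K).obj c)).hom.app (op c) (ys K c (𝟙 c)))
          = (show ((lSh J).obj (p.obj c)).val.obj (op (p.obj c)) from (theta p K J hcont c).hom.app (op c) (ys K c (𝟙 c))) := h2
        _ = ys J (p.obj c) (𝟙 (p.obj c)) := by rw [theta_app, p.map_id]
    calc (δ ≫ eps p K J hcont L adj c).hom.app (op (p.obj c)) (ys J (p.obj c) (𝟙 (p.obj c)))
        = (eps p K J hcont L adj c).hom.app (op (p.obj c))
            (δ.hom.app (op (p.obj c)) (ys J (p.obj c) (𝟙 (p.obj c)))) := rfl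
      _ = (eps p K J hcont L adj c).hom.app (op (p.obj c)) t := by rw [hδapp]
      _ = ys J (p.obj c) (𝟙 (p.obj c)) := h1

lemma eps_natural {c c' : D} (m : c ⟶ c') :
    eps p K J hcont L adj c ≫ (lSh J).map (p.map m)
      = L.map ((lSh K).map m) ≫ eps p K J hcont L adj c' := by
  apply hom_ext_L p K J hcont L adj
  rw [phi_comp, phi_pre, phi_eps, phi_eps]
  rw [ys_map, ys_res, Category.id_comp, Category.comp_id]

end Comparison
section Sections

variable (p : D ⥤ C) (K : GrothendieckTopology D) (J : GrothendieckTopology C)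
variable (hcont : ∀ F : Sheaf J (Type u), Presheaf.IsSheaf K (p.op ⋙ F.val))
variable (hp : IsComorphismOfSites p K J)

include hp in
lemma sect_unique {d' d : D} {f : d' ⟶ d} (hLC : LocallyCartesian K p f) {e : D}
    {s t : ((lSh K).obj d').val.obj (op e)}
    (hθ : (theta p K J hcont d').hom.app (op e) s = (theta p K J hcont d').hom.app (op e) t)
    (hf : ((lSh K).map f).hom.app (op e) s = ((lSh K).map f).hom.app (op e) t) :
    s = t := by
  obtain ⟨Ss, hSs, hs⟩ := ys_locally_surjective K d' s
  obtain ⟨St, hSt, hts⟩ := ys_locally_surjective K d' t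
  have hinner : ∀ ⦃e' : D⦄ (v : e' ⟶ e), (Ss ⊓ St).arrows v → ∃ R : Sieve e', R ∈ K e' ∧
      ∀ ⦃e₀ : D⦄ (z : e₀ ⟶ e'), R.arrows z →
        ((lSh K).obj d').val.map (z ≫ v).op s = ((lSh K).obj d').val.map (z ≫ v).op t := by
    intro e' v hv
    obtain ⟨a, ha⟩ := hs v hv.1
    obtain ⟨b, hb⟩ := hts v hv.2
    have hθab : ys J (p.obj d') (p.map a) = ys J (p.obj d') (p.map b) := by
      calc (show ((restrictSheaf p K J hcont).obj ((lSh J).obj (p.obj d'))).val.obj (op e') from ys J (p.obj d') (p.map a))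
          = (theta p K J hcont d').hom.app (op e') (ys K d' a) := (theta_app p K J hcont d' a).symm
        _ = (theta p K J hcont d').hom.app (op e') (((lSh K).obj d').val.map v.op s) := by rw [ha]
        _ = ((restrictSheaf p K J hcont).obj ((lSh J).obj (p.obj d'))).val.map v.op
              ((theta p K J hcont d').hom.app (op e) s) :=
            NatTrans.naturality_apply (theta p K J hcont d').hom v.op s
        _ = ((restrictSheaf p K J hcont).obj ((lSh J).obj (p.obj d'))).val.map v.op
              ((theta p K J hcont d').hom.app (op e) t) := by rw [hθ]
        _ = (theta p K J hcont d').hom.app (op e') (((lSh K).obj d').val.map v.op t) :=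
            (NatTrans.naturality_apply (theta p K J hcont d').hom v.op t).symm
        _ = (theta p K J hcont d').hom.app (op e') (ys K d' b) := by rw [hb]
        _ = (show ((restrictSheaf p K J hcont).obj ((lSh J).obj (p.obj d'))).val.obj (op e') from ys J (p.obj d') (p.map b)) := theta_app p K J hcont d' b
    obtain ⟨RJ, hRJ, hRJeq⟩ := ys_locally_injective J (p.obj d') hθab
    have hfab : ys K d (a ≫ f) = ys K d (b ≫ f) := by
      calc ys K d (a ≫ f) = ((lSh K).map f).hom.app (op e') (ys K d' a) := (ys_map K f a).symm
        _ = ((lSh K).map f).hom.app (op e') (((lSh K).obj d').val.map v.op s) := by rw [ha]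
        _ = ((lSh K).obj d).val.map v.op (((lSh K).map f).hom.app (op e) s) :=
            NatTrans.naturality_apply ((lSh K).map f).hom v.op s
        _ = ((lSh K).obj d).val.map v.op (((lSh K).map f).hom.app (op e) t) := by rw [hf]
        _ = ((lSh K).map f).hom.app (op e') (((lSh K).obj d').val.map v.op t) :=
            (NatTrans.naturality_apply ((lSh K).map f).hom v.op t).symm
        _ = ((lSh K).map f).hom.app (op e') (ys K d' b) := by rw [hb]
        _ = ys K d (b ≫ f) := ys_map K f b
    obtain ⟨R2, hR2, hR2eq⟩ := ys_locally_injective K d hfab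
    refine local_choice K (K.intersection_covering (hp _ _ hRJ) hR2)
      (fun e₀ z => ((lSh K).obj d').val.map (z ≫ v).op s
        = ((lSh K).obj d').val.map (z ≫ v).op t) ?_
    intro e₀ z hz
    have hzz : (z ≫ a) ≫ f = (z ≫ b) ≫ f := by
      rw [Category.assoc, Category.assoc]; exact hR2eq z hz.2
    have hpz : p.map (z ≫ a) = p.map (z ≫ b) := by
      rw [p.map_comp, p.map_comp]; exact hRJeq (p.map z) hz.1
    obtain ⟨M, hM, hMeq⟩ := hLC.2 e₀ (z ≫ a) (z ≫ b) hzz hpz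
    refine ⟨M, hM, ?_⟩
    intro e₁ w hw
    have h1 : ((lSh K).obj d').val.map ((w ≫ z) ≫ v).op s = ys K d' ((w ≫ z) ≫ a) := by
      rw [op_comp, FunctorToTypes.map_comp_apply, ← ha, ys_res]
    have h2 : ((lSh K).obj d').val.map ((w ≫ z) ≫ v).op t = ys K d' ((w ≫ z) ≫ b) := by
      rw [op_comp, FunctorToTypes.map_comp_apply, ← hb, ys_res]
    rw [h1, h2, Category.assoc, Category.assoc, hMeq w hw]
  obtain ⟨W, hW, hWP⟩ := local_choice K (K.intersection_covering hSs hSt)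
    (fun e' w => ((lSh K).obj d').val.map w.op s = ((lSh K).obj d').val.map w.op t) hinner
  exact sections_ext K ((lSh K).obj d') hW hWP

include hp in
lemma sect_exists {d' d : D} {f : d' ⟶ d} (hLC : LocallyCartesian K p f) {e : D}
    (a : ((lSh K).obj d).val.obj (op e))
    (b : ((lSh J).obj (p.obj d')).val.obj (op (p.obj e)))
    (hab : ((lSh J).map (p.map f)).hom.app (op (p.obj e)) b
      = (theta p K J hcont d).hom.app (op e) a) :
    ∃ s : ((lSh K).obj d').val.obj (op e),
      (theta p K J hcont d').hom.app (op e) s = b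
        ∧ ((lSh K).map f).hom.app (op e) s = a := by
  obtain ⟨Sa, hSa, ha⟩ := ys_locally_surjective K d a
  obtain ⟨Sb, hSb, hbs⟩ := ys_locally_surjective J (p.obj d') b
  have hinner : ∀ ⦃e' : D⦄ (v : e' ⟶ e), (Sa ⊓ Sb.functorPullback p).arrows v →
      ∃ R : Sieve e', R ∈ K e' ∧ ∀ ⦃e₀ : D⦄ (z : e₀ ⟶ e'), R.arrows z →
        ∃ c : e₀ ⟶ d',
          ys J (p.obj d') (p.map c)
            = ((lSh J).obj (p.obj d')).val.map (p.map (z ≫ v)).op b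
          ∧ ys K d (c ≫ f) = ((lSh K).obj d).val.map (z ≫ v).op a := by
    intro e' v hv
    obtain ⟨g, hg⟩ := ha v hv.1
    obtain ⟨m, hm⟩ := hbs (p.map v) hv.2
    have hcomp : ys J (p.obj d) (m ≫ p.map f) = ys J (p.obj d) (p.map g) := by
      calc ys J (p.obj d) (m ≫ p.map f)
          = ((lSh J).map (p.map f)).hom.app (op (p.obj e')) (ys J (p.obj d') m) :=
            (ys_map J (p.map f) m).symm
        _ = ((lSh J).map (p.map f)).hom.app (op (p.obj e'))
              (((lSh J).obj (p.obj d')).val.map (p.map v).op b) := by rw [hm]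
        _ = ((lSh J).obj (p.obj d)).val.map (p.map v).op
              (((lSh J).map (p.map f)).hom.app (op (p.obj e)) b) :=
            NatTrans.naturality_apply ((lSh J).map (p.map f)).hom (p.map v).op b
        _ = ((lSh J).obj (p.obj d)).val.map (p.map v).op
              ((theta p K J hcont d).hom.app (op e) a) := by rw [hab]
        _ = (show ((lSh J).obj (p.obj d)).val.obj (op (p.obj e')) from (theta p K J hcont d).hom.app (op e') (((lSh K).obj d).val.map v.op a)) :=
            (NatTrans.naturality_apply (theta p K J hcont d).hom v.op a).symm
        _ = (show ((lSh J).obj (p.obj d)).val.obj (op (p.obj e')) from (theta p K J hcont d).hom.app (op e') (ys K d g)) := by rw [hg]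
        _ = ys J (p.obj d) (p.map g) := theta_app p K J hcont d g
    obtain ⟨RJ, hRJ, hRJeq⟩ := ys_locally_injective J (p.obj d) hcomp
    refine local_choice K (hp _ _ hRJ)
      (fun e₀ z => ∃ c : e₀ ⟶ d',
        ys J (p.obj d') (p.map c)
          = ((lSh J).obj (p.obj d')).val.map (p.map (z ≫ v)).op b
        ∧ ys K d (c ≫ f) = ((lSh K).obj d).val.map (z ≫ v).op a) ?_
    intro e₀ z hz
    have hzc : (p.map z ≫ m) ≫ p.map f = p.map (z ≫ g) := by
      rw [Category.assoc, p.map_comp]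
      exact hRJeq (p.map z) hz
    obtain ⟨M, hM, hMw⟩ := hLC.1 e₀ (z ≫ g) (p.map z ≫ m) hzc
    refine ⟨M, hM, ?_⟩
    intro e₁ w hw
    obtain ⟨cw, hcw1, hcw2⟩ := hMw w hw
    refine ⟨cw, ?_, ?_⟩
    · calc ys J (p.obj d') (p.map cw)
          = ys J (p.obj d') ((p.map w ≫ p.map z) ≫ m) := by
            rw [Category.assoc, hcw1]
        _ = ((lSh J).obj (p.obj d')).val.map (p.map w ≫ p.map z).op (ys J (p.obj d') m) :=
            (ys_res J (p.obj d') (p.map w ≫ p.map z) m).symm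
        _ = ((lSh J).obj (p.obj d')).val.map (p.map w ≫ p.map z).op
              (((lSh J).obj (p.obj d')).val.map (p.map v).op b) := by rw [hm]
        _ = ((lSh J).obj (p.obj d')).val.map (p.map ((w ≫ z) ≫ v)).op b := by
            rw [← FunctorToTypes.map_comp_apply, ← op_comp, ← p.map_comp, ← p.map_comp,
              Category.assoc]
    · calc ys K d (cw ≫ f)
          = ys K d ((w ≫ z) ≫ g) := by rw [hcw2, ← Category.assoc]
        _ = ((lSh K).obj d).val.map (w ≫ z).op (ys K d g) := (ys_res K d (w ≫ z) g).symm
        _ = ((lSh K).obj d).val.map (w ≫ z).op (((lSh K).obj d).val.map v.op a) := by rw [hg]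
        _ = ((lSh K).obj d).val.map ((w ≫ z) ≫ v).op a := by
            rw [← FunctorToTypes.map_comp_apply, ← op_comp]
  obtain ⟨W, hW, hWP⟩ := local_choice K
    (K.intersection_covering hSa (hp _ _ hSb))
    (fun e₀ w => ∃ c : e₀ ⟶ d',
      ys J (p.obj d') (p.map c) = ((lSh J).obj (p.obj d')).val.map (p.map w).op b
      ∧ ys K d (c ≫ f) = ((lSh K).obj d).val.map w.op a) hinner
  choose cw hc1 hc2 using hWP
  have hsheaf : Presieve.IsSheafFor ((lSh K).obj d').val W.arrows :=
    (isSheaf_iff_isSheaf_of_type K _).1 ((lSh K).obj d').cond W hW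
  let fam : Presieve.FamilyOfElements ((lSh K).obj d').val W.arrows :=
    fun e₀ w hw => ys K d' (cw w hw)
  have hcompat : fam.Compatible := by
    intro Y₁ Y₂ Z g₁ g₂ f₁ f₂ h₁ h₂ hcomm
    show ((lSh K).obj d').val.map g₁.op (ys K d' (cw f₁ h₁))
      = ((lSh K).obj d').val.map g₂.op (ys K d' (cw f₂ h₂))
    rw [ys_res, ys_res]
    refine sect_unique p K J hcont hp hLC ?_ ?_
    · calc (show ((lSh J).obj (p.obj d')).val.obj (op (p.obj Z)) from (theta p K J hcont d').hom.app (op Z) (ys K d' (g₁ ≫ cw f₁ h₁)))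
          = ys J (p.obj d') (p.map g₁ ≫ p.map (cw f₁ h₁)) := by
            rw [theta_app, p.map_comp]
        _ = ((lSh J).obj (p.obj d')).val.map (p.map g₁).op
              (ys J (p.obj d') (p.map (cw f₁ h₁))) := (ys_res J _ _ _).symm
        _ = ((lSh J).obj (p.obj d')).val.map (p.map g₁).op
              (((lSh J).obj (p.obj d')).val.map (p.map f₁).op b) := by rw [hc1 f₁ h₁]
        _ = ((lSh J).obj (p.obj d')).val.map (p.map (g₁ ≫ f₁)).op b := by
            rw [← FunctorToTypes.map_comp_apply, ← op_comp, ← p.map_comp]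
        _ = ((lSh J).obj (p.obj d')).val.map (p.map (g₂ ≫ f₂)).op b := by rw [hcomm]
        _ = ((lSh J).obj (p.obj d')).val.map (p.map g₂).op
              (((lSh J).obj (p.obj d')).val.map (p.map f₂).op b) := by
            rw [← FunctorToTypes.map_comp_apply, ← op_comp, ← p.map_comp]
        _ = ((lSh J).obj (p.obj d')).val.map (p.map g₂).op
              (ys J (p.obj d') (p.map (cw f₂ h₂))) := by rw [hc1 f₂ h₂]
        _ = ys J (p.obj d') (p.map g₂ ≫ p.map (cw f₂ h₂)) := ys_res J _ _ _
        _ = (show ((lSh J).obj (p.obj d')).val.obj (op (p.obj Z)) from (theta p K J hcont d').hom.app (op Z) (ys K d' (g₂ ≫ cw f₂ h₂))) := by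
            rw [theta_app, p.map_comp]
    · calc ((lSh K).map f).hom.app (op Z) (ys K d' (g₁ ≫ cw f₁ h₁))
          = ys K d (g₁ ≫ (cw f₁ h₁ ≫ f)) := by rw [ys_map, Category.assoc]
        _ = ((lSh K).obj d).val.map g₁.op (ys K d (cw f₁ h₁ ≫ f)) := (ys_res K _ _ _).symm
        _ = ((lSh K).obj d).val.map g₁.op (((lSh K).obj d).val.map f₁.op a) := by
            rw [hc2 f₁ h₁]
        _ = ((lSh K).obj d).val.map (g₁ ≫ f₁).op a := by
            rw [← FunctorToTypes.map_comp_apply, ← op_comp]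
        _ = ((lSh K).obj d).val.map (g₂ ≫ f₂).op a := by rw [hcomm]
        _ = ((lSh K).obj d).val.map g₂.op (((lSh K).obj d).val.map f₂.op a) := by
            rw [← FunctorToTypes.map_comp_apply, ← op_comp]
        _ = ((lSh K).obj d).val.map g₂.op (ys K d (cw f₂ h₂ ≫ f)) := by rw [hc2 f₂ h₂]
        _ = ys K d (g₂ ≫ (cw f₂ h₂ ≫ f)) := ys_res K _ _ _
        _ = ((lSh K).map f).hom.app (op Z) (ys K d' (g₂ ≫ cw f₂ h₂)) := by
            rw [ys_map, Category.assoc]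
  have hres : ∀ ⦃e₀ : D⦄ (w : e₀ ⟶ e) (hw : W.arrows w),
      ((lSh K).obj d').val.map w.op (hsheaf.amalgamate fam hcompat) = ys K d' (cw w hw) :=
    fun e₀ w hw => hsheaf.valid_glue hcompat w hw
  refine ⟨hsheaf.amalgamate fam hcompat, ?_, ?_⟩
  · refine sections_ext K ((restrictSheaf p K J hcont).obj ((lSh J).obj (p.obj d'))) hW ?_
    intro e₀ w hw
    calc ((restrictSheaf p K J hcont).obj ((lSh J).obj (p.obj d'))).val.map w.op
          ((theta p K J hcont d').hom.app (op e) (hsheaf.amalgamate fam hcompat))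
        = (theta p K J hcont d').hom.app (op e₀)
            (((lSh K).obj d').val.map w.op (hsheaf.amalgamate fam hcompat)) :=
          (NatTrans.naturality_apply (theta p K J hcont d').hom w.op _).symm
      _ = (theta p K J hcont d').hom.app (op e₀) (ys K d' (cw w hw)) := by rw [hres w hw]
      _ = (show ((restrictSheaf p K J hcont).obj ((lSh J).obj (p.obj d'))).val.obj (op e₀) from ys J (p.obj d') (p.map (cw w hw))) := theta_app p K J hcont d' (cw w hw)
      _ = (show ((restrictSheaf p K J hcont).obj ((lSh J).obj (p.obj d'))).val.obj (op e₀) from ((lSh J).obj (p.obj d')).val.map (p.map w).op b) := hc1 w hw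
  · refine sections_ext K ((lSh K).obj d) hW ?_
    intro e₀ w hw
    calc ((lSh K).obj d).val.map w.op
          (((lSh K).map f).hom.app (op e) (hsheaf.amalgamate fam hcompat))
        = ((lSh K).map f).hom.app (op e₀)
            (((lSh K).obj d').val.map w.op (hsheaf.amalgamate fam hcompat)) :=
          (NatTrans.naturality_apply ((lSh K).map f).hom w.op _).symm
      _ = ((lSh K).map f).hom.app (op e₀) (ys K d' (cw w hw)) := by rw [hres w hw]
      _ = ys K d (cw w hw ≫ f) := ys_map K f (cw w hw)
      _ = ((lSh K).obj d).val.map w.op a := hc2 w hw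

include hp in
lemma sect_existsUnique {d' d : D} {f : d' ⟶ d} (hLC : LocallyCartesian K p f) {e : D}
    (a : ((lSh K).obj d).val.obj (op e))
    (b : ((lSh J).obj (p.obj d')).val.obj (op (p.obj e)))
    (hab : ((lSh J).map (p.map f)).hom.app (op (p.obj e)) b
      = (theta p K J hcont d).hom.app (op e) a) :
    ∃! s : ((lSh K).obj d').val.obj (op e),
      (theta p K J hcont d').hom.app (op e) s = b
        ∧ ((lSh K).map f).hom.app (op e) s = a := by
  obtain ⟨s, hs1, hs2⟩ := sect_exists p K J hcont hp hLC a b hab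
  refine ⟨s, ⟨hs1, hs2⟩, ?_⟩
  intro t ⟨ht1, ht2⟩
  exact sect_unique p K J hcont hp hLC (ht1.trans hs1.symm) (ht2.trans hs2.symm)

end Sections
end LocCartAux

open LocCartAux Opposite in
/-- For a continuous comorphism of sites `p : (𝒟,K) ⟶ (𝒞,J)` with `L` a left adjoint of the
restriction functor `ρ_p`, a morphism `f` of `𝒟` is `K`-locally cartesian iff `l_K(f)` is
cartesian for `L`. -/
theorem locallyCartesian_iff_cartesian_for_leftAdjoint
    (p : D ⥤ C) (K : GrothendieckTopology D) (J : GrothendieckTopology C)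
    (hp : IsComorphismOfSites p K J)
    (hcont : ∀ F : Sheaf J (Type u), Presheaf.IsSheaf K (p.op ⋙ F.val))
    (L : Sheaf K (Type u) ⥤ Sheaf J (Type u))
    (adj : L ⊣ restrictSheaf p K J hcont)
    {d' d : D} (f : d' ⟶ d) :
    LocallyCartesian K p f ↔ IsCartesianFor L ((lSh K).map f) := by
  constructor
  · -- locally cartesian → cartesian for L
    intro hLC
    intro X gg hh hcomm
    haveI := eps_isIso p K J hcont L adj d'
    have hcompat : adj.homEquiv _ _ (hh ≫ eps p K J hcont L adj d')
        ≫ (restrictSheaf p K J hcont).map ((lSh J).map (p.map f))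
        = gg ≫ theta p K J hcont d := by
      rw [← Adjunction.homEquiv_naturality_right, Category.assoc,
        eps_natural p K J hcont L adj f, ← Category.assoc, hcomm,
        Adjunction.homEquiv_naturality_left, homEquiv_eps]
    set hhat : X ⟶ (restrictSheaf p K J hcont).obj ((lSh J).obj (p.obj d')) :=
      adj.homEquiv _ _ (hh ≫ eps p K J hcont L adj d') with hhat_def
    have hkey : ∀ (e : Dᵒᵖ) (x : X.val.obj e),
        ∃! s : ((lSh K).obj d').val.obj e,
          (theta p K J hcont d').hom.app e s = hhat.hom.app e x
          ∧ ((lSh K).map f).hom.app e s = gg.hom.app e x := by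
      intro e x
      exact sect_existsUnique p K J hcont hp hLC (e := e.unop) (gg.hom.app e x)
        (hhat.hom.app e x)
        (types_congr_hom (NatTrans.congr_app (congrArg InducedCategory.Hom.hom hcompat) e) x)
    have hnat : ∀ {e e' : Dᵒᵖ} (m : e ⟶ e') (x : X.val.obj e),
        ((lSh K).obj d').val.map m ((hkey e x).choose)
          = (hkey e' (X.val.map m x)).choose := by
      intro e e' m x
      refine (hkey e' (X.val.map m x)).unique ⟨?_, ?_⟩ (hkey e' (X.val.map m x)).choose_spec.1
      · calc (theta p K J hcont d').hom.app e' (((lSh K).obj d').val.map m ((hkey e x).choose))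
            = ((restrictSheaf p K J hcont).obj ((lSh J).obj (p.obj d'))).val.map m
                ((theta p K J hcont d').hom.app e ((hkey e x).choose)) :=
              NatTrans.naturality_apply (theta p K J hcont d').hom m _
          _ = ((restrictSheaf p K J hcont).obj ((lSh J).obj (p.obj d'))).val.map m
                (hhat.hom.app e x) := by rw [(hkey e x).choose_spec.1.1]
          _ = hhat.hom.app e' (X.val.map m x) :=
              (NatTrans.naturality_apply hhat.hom m x).symm
      · calc ((lSh K).map f).hom.app e' (((lSh K).obj d').val.map m ((hkey e x).choose))
            = ((lSh K).obj d).val.map m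
                (((lSh K).map f).hom.app e ((hkey e x).choose)) :=
              NatTrans.naturality_apply ((lSh K).map f).hom m _
          _ = ((lSh K).obj d).val.map m (gg.hom.app e x) := by rw [(hkey e x).choose_spec.1.2]
          _ = gg.hom.app e' (X.val.map m x) := (NatTrans.naturality_apply gg.hom m x).symm
    let h' : X ⟶ (lSh K).obj d' :=
      ⟨{ app := fun e => TypeCat.ofHom fun x => (hkey e x).choose
         naturality := fun e e' m => by ext x; exact (hnat m x).symm }⟩
    have hθeq : h' ≫ theta p K J hcont d' = hhat := by
      apply Sheaf.hom_ext
      apply NatTrans.ext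
      funext e; ext x
      exact (hkey e x).choose_spec.1.1
    have hfeq : h' ≫ (lSh K).map f = gg := by
      apply Sheaf.hom_ext
      apply NatTrans.ext
      funext e; ext x
      exact (hkey e x).choose_spec.1.2
    have hLeq : L.map h' = hh := by
      have h1 : adj.homEquiv _ _ (L.map h' ≫ eps p K J hcont L adj d')
          = adj.homEquiv _ _ (hh ≫ eps p K J hcont L adj d') := by
        rw [homEquiv_Lmap_comp_eps, hθeq, hhat_def]
      exact (cancel_mono (eps p K J hcont L adj d')).1 ((adj.homEquiv _ _).injective h1)
    refine ⟨h', ⟨hLeq, hfeq⟩, ?_⟩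
    intro y hy
    obtain ⟨hy1, hy2⟩ := hy
    have hyθ : y ≫ theta p K J hcont d' = hhat := by
      rw [← homEquiv_Lmap_comp_eps p K J hcont L adj y, hy1, hhat_def]
    apply Sheaf.hom_ext
    apply NatTrans.ext
    funext e; ext x
    exact (hkey e x).unique
      ⟨types_congr_hom (NatTrans.congr_app (congrArg InducedCategory.Hom.hom hyθ) e) x,
       types_congr_hom (NatTrans.congr_app (congrArg InducedCategory.Hom.hom hy2) e) x⟩
      (hkey e x).choose_spec.1
  · -- cartesian for L → locally cartesian
    intro hcart
    haveI := eps_isIso p K J hcont L adj d'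
    haveI := eps_isIso p K J hcont L adj d
    constructor
    · intro d'' g h hpf
      have h3 : inv (eps p K J hcont L adj d') ≫ L.map ((lSh K).map f)
          = (lSh J).map (p.map f) ≫ inv (eps p K J hcont L adj d) := by
        rw [IsIso.inv_comp_eq, ← Category.assoc, eps_natural p K J hcont L adj f,
          Category.assoc, IsIso.hom_inv_id, Category.comp_id]
      have hcomm : (eps p K J hcont L adj d'' ≫ (lSh J).map h
            ≫ inv (eps p K J hcont L adj d')) ≫ L.map ((lSh K).map f)
          = L.map ((lSh K).map g) := by
        simp only [Category.assoc]
        rw [h3, ← Functor.map_comp_assoc, hpf, ← Category.assoc,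
          eps_natural p K J hcont L adj g, Category.assoc, IsIso.hom_inv_id, Category.comp_id]
      obtain ⟨h', hh'both, -⟩ := hcart ((lSh K).map g)
        (eps p K J hcont L adj d'' ≫ (lSh J).map h ≫ inv (eps p K J hcont L adj d')) hcomm
      obtain ⟨hLh', hh'f⟩ := hh'both
      have hLε : L.map h' ≫ eps p K J hcont L adj d'
          = eps p K J hcont L adj d'' ≫ (lSh J).map h := by
        rw [hLh', Category.assoc, Category.assoc, IsIso.inv_hom_id, Category.comp_id]
      have hθrel : h' ≫ theta p K J hcont d'
          = theta p K J hcont d'' ≫ (restrictSheaf p K J hcont).map ((lSh J).map h) := by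
        have h4 := congrArg (adj.homEquiv _ _) hLε
        rwa [homEquiv_Lmap_comp_eps, Adjunction.homEquiv_naturality_right, homEquiv_eps] at h4
      set s := h'.hom.app (op d'') (ys K d'' (𝟙 d'')) with hs_def
      have hsθ : (theta p K J hcont d').hom.app (op d'') s = ys J (p.obj d') h := by
        have hc := types_congr_hom (NatTrans.congr_app (congrArg InducedCategory.Hom.hom hθrel) (op d''))
          (ys K d'' (𝟙 d''))
        calc (show ((lSh J).obj (p.obj d')).val.obj (op (p.obj d'')) from (theta p K J hcont d').hom.app (op d'') s)
            = ((lSh J).map h).hom.app (op (p.obj d''))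
                ((theta p K J hcont d'').hom.app (op d'') (ys K d'' (𝟙 d''))) := hc
          _ = ((lSh J).map h).hom.app (op (p.obj d''))
                (ys J (p.obj d'') (𝟙 (p.obj d''))) := by rw [theta_app, p.map_id]
          _ = ys J (p.obj d') (𝟙 (p.obj d'') ≫ h) := ys_map J h (𝟙 (p.obj d''))
          _ = ys J (p.obj d') h := by rw [Category.id_comp]
      have hsf : ((lSh K).map f).hom.app (op d'') s = ys K d g := by
        have hc := types_congr_hom (NatTrans.congr_app (congrArg InducedCategory.Hom.hom hh'f) (op d''))
          (ys K d'' (𝟙 d''))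
        calc ((lSh K).map f).hom.app (op d'') s
            = ((lSh K).map g).hom.app (op d'') (ys K d'' (𝟙 d'')) := hc
          _ = ys K d (𝟙 d'' ≫ g) := ys_map K g (𝟙 d'')
          _ = ys K d g := by rw [Category.id_comp]
      obtain ⟨S₁, hS₁, hS₁v⟩ := ys_locally_surjective K d' s
      have hinner : ∀ ⦃e' : D⦄ (v : e' ⟶ d''), S₁.arrows v →
          ∃ R : Sieve e', R ∈ K e' ∧ ∀ ⦃e₀ : D⦄ (z : e₀ ⟶ e'), R.arrows z →
            ∃ hv : e₀ ⟶ d', p.map (z ≫ v) ≫ h = p.map hv ∧ hv ≫ f = (z ≫ v) ≫ g := by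
        intro e' v hv
        obtain ⟨av, hav⟩ := hS₁v v hv
        have hθv : ys J (p.obj d') (p.map av) = ys J (p.obj d') (p.map v ≫ h) := by
          calc ys J (p.obj d') (p.map av)
              = (show ((lSh J).obj (p.obj d')).val.obj (op (p.obj e')) from (theta p K J hcont d').hom.app (op e') (ys K d' av)) :=
                (theta_app p K J hcont d' av).symm
            _ = (show ((lSh J).obj (p.obj d')).val.obj (op (p.obj e')) from (theta p K J hcont d').hom.app (op e') (((lSh K).obj d').val.map v.op s)) := by
                rw [hav]
            _ = (show ((lSh J).obj (p.obj d')).val.obj (op (p.obj e')) from ((restrictSheaf p K J hcont).obj ((lSh J).obj (p.obj d'))).val.map v.op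
                  ((theta p K J hcont d').hom.app (op d'') s)) :=
                NatTrans.naturality_apply (theta p K J hcont d').hom v.op s
            _ = ((lSh J).obj (p.obj d')).val.map (p.map v).op (ys J (p.obj d') h) := by
                rw [hsθ]; rfl
            _ = ys J (p.obj d') (p.map v ≫ h) := ys_res J (p.obj d') (p.map v) h
        obtain ⟨RJ, hRJ, hRJeq⟩ := ys_locally_injective J (p.obj d') hθv
        have hfv : ys K d (av ≫ f) = ys K d (v ≫ g) := by
          calc ys K d (av ≫ f)
              = ((lSh K).map f).hom.app (op e') (ys K d' av) := (ys_map K f av).symm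
            _ = ((lSh K).map f).hom.app (op e') (((lSh K).obj d').val.map v.op s) := by
                rw [hav]
            _ = ((lSh K).obj d).val.map v.op (((lSh K).map f).hom.app (op d'') s) :=
                NatTrans.naturality_apply ((lSh K).map f).hom v.op s
            _ = ((lSh K).obj d).val.map v.op (ys K d g) := by rw [hsf]
            _ = ys K d (v ≫ g) := ys_res K d v g
        obtain ⟨R2, hR2, hR2eq⟩ := ys_locally_injective K d hfv
        refine ⟨RJ.functorPullback p ⊓ R2,
          K.intersection_covering (hp _ _ hRJ) hR2, ?_⟩
        intro e₀ z hz
        refine ⟨z ≫ av, ?_, ?_⟩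
        · rw [p.map_comp, p.map_comp, Category.assoc]
          exact (hRJeq (p.map z) hz.1).symm
        · rw [Category.assoc, Category.assoc]
          exact hR2eq z hz.2
      obtain ⟨W, hW, hWP⟩ := local_choice K hS₁
        (fun e₀ w => ∃ hw : e₀ ⟶ d', p.map w ≫ h = p.map hw ∧ hw ≫ f = w ≫ g) hinner
      exact ⟨W, hW, fun {e} v hv => hWP v hv⟩
    · intro d'' h h' hff hpp
      have hL : L.map ((lSh K).map h) = L.map ((lSh K).map h') := by
        have h1 : L.map ((lSh K).map h) ≫ eps p K J hcont L adj d'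
            = L.map ((lSh K).map h') ≫ eps p K J hcont L adj d' := by
          rw [← eps_natural p K J hcont L adj h, ← eps_natural p K J hcont L adj h', hpp]
        exact (cancel_mono (eps p K J hcont L adj d')).1 h1
      have heq : (lSh K).map h = (lSh K).map h' := by
        obtain ⟨w, -, huniq⟩ := hcart ((lSh K).map (h ≫ f)) (L.map ((lSh K).map h))
          (by rw [← Functor.map_comp, ← Functor.map_comp])
        have e1 := huniq ((lSh K).map h) ⟨rfl, by rw [← Functor.map_comp]⟩
        have e2 := huniq ((lSh K).map h') ⟨hL.symm, by rw [← Functor.map_comp, ← hff]⟩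
        rw [e1, e2]
      have hys : ys K d' h = ys K d' h' := by
        have hc := types_congr_hom (NatTrans.congr_app (congrArg InducedCategory.Hom.hom heq) (op d''))
          (ys K d'' (𝟙 d''))
        rw [ys_map, ys_map, Category.id_comp, Category.id_comp] at hc
        exact hc
      obtain ⟨S, hS, hSe⟩ := ys_locally_injective K d' hys
      exact ⟨S, hS, fun {e} v hv => hSe v hv⟩
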